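/- For all v, r : Fin n → ℝ, setting d = v − r, one has A(P v − P r, d) + s(Q v − Q r, d) ≥ (1/4) · A(d, d). In other words, the operator T̃₁ defined by [T̃₁ r, z] = A(P r, z) + s(Q r, z) is strongly monotone with constant 1/4 with respect to the seminorm induced by A. -/
import Mathlib

lemma clamp_firm (a b x y : ℝ) :
    0 ≤ ((x - y) - ((max a (min x b)) - (max a (min y b)))) *
        ((max a (min x b)) - (max a (min y b))) := by
  rcases min_cases x b with ⟨h1, h2⟩ | ⟨h1, h2⟩ <;>
  rcases min_cases y b with ⟨h3, h4⟩ | ⟨h3, h4⟩ <;>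
  rw [h1, h3] <;>
  rcases max_cases a x with ⟨h5, h6⟩ | ⟨h5, h6⟩ <;>
  rcases max_cases a y with ⟨h7, h8⟩ | ⟨h7, h8⟩ <;>
  rcases max_cases a b with ⟨h9, h10⟩ | ⟨h9, h10⟩ <;>
  simp_all <;> nlinarith

/-- Strong monotonicity (with constant `1/4`) of the operator
`[T̃₁ r, z] = A (P r) z + s (Q r) z`, where `A` is a symmetric positive
semidefinite bilinear form dominated by `s`:
`A (P v - P r) (v - r) + s (Q v - Q r) (v - r) ≥ (1/4) * A (v - r) (v - r)`. -/
theorem stmt_3 (n : ℕ) (a b σ : Fin n → ℝ)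
    (hab : ∀ i, a i ≤ b i) (hσ : ∀ i, 0 < σ i)
    (P Q : (Fin n → ℝ) → (Fin n → ℝ))
    (hP : ∀ v i, P v i = max (a i) (min (v i) (b i)))
    (hQ : ∀ v, Q v = v - P v)
    (s : (Fin n → ℝ) → (Fin n → ℝ) → ℝ)
    (hs : ∀ w v, s w v = ∑ i, σ i * w i * v i)
    (A : (Fin n → ℝ) → (Fin n → ℝ) → ℝ)
    (hA_add_left : ∀ x y z, A (x + y) z = A x z + A y z)
    (hA_smul_left : ∀ (c : ℝ) x z, A (c • x) z = c * A x z)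
    (hA_symm : ∀ x z, A x z = A z x)
    (hA_psd : ∀ z, 0 ≤ A z z)
    (hA_le_s : ∀ z, A z z ≤ s z z)
    (v r : Fin n → ℝ) :
    A (P v - P r) (v - r) + s (Q v - Q r) (v - r) ≥ (1/4) * A (v - r) (v - r) := by
  have hA_sub_left : ∀ x y z, A (x - y) z = A x z - A y z := by
    intro x y z
    have h := hA_add_left x ((-1 : ℝ) • y) z
    rw [hA_smul_left] at h
    rw [sub_eq_add_neg, ← neg_one_smul ℝ y, h]; ring
  have hA_add_right : ∀ x y z, A z (x + y) = A z x + A z y := by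
    intro x y z; rw [hA_symm, hA_add_left, hA_symm x z, hA_symm y z]
  have hA_smul_right : ∀ (c : ℝ) x z, A z (c • x) = c * A z x := by
    intro c x z; rw [hA_symm, hA_smul_left, hA_symm]
  set d := v - r with hd
  set p := P v - P r with hp
  set q := Q v - Q r with hq0
  have hqd : q = d - p := by
    rw [hq0, hQ, hQ, hp, hd]; abel
  -- coordinatewise facts
  have hpi : ∀ i, p i = max (a i) (min (v i) (b i)) - max (a i) (min (r i) (b i)) := by
    intro i; simp [hp, hP]
  have hqi : ∀ i, q i = (v i - r i) - p i := by
    intro i; rw [hqd]; simp [hd]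
  have hqp_nonneg : ∀ i, 0 ≤ q i * p i := by
    intro i
    rw [hqi i, hpi i]
    exact clamp_firm (a i) (b i) (v i) (r i)
  -- s q d ≥ s q q
  have hsq : s q q + ∑ i, σ i * (q i * p i) = s q d := by
    rw [hs, hs, ← Finset.sum_add_distrib]
    apply Finset.sum_congr rfl
    intro i _
    have : d i = q i + p i := by
      rw [hqi i]; simp only [hd, Pi.sub_apply]; ring
    rw [this]; ring
  have hsum_nonneg : 0 ≤ ∑ i, σ i * (q i * p i) := by
    apply Finset.sum_nonneg
    intro i _
    exact mul_nonneg (le_of_lt (hσ i)) (hqp_nonneg i)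
  have hsqd : A q q ≤ s q d := by
    have := hA_le_s q
    linarith
  -- Cauchy-type: A q d ≤ A q q + (1/4) A d d
  have hw : (0:ℝ) ≤ A (q - (1/2 : ℝ) • d) (q - (1/2 : ℝ) • d) := hA_psd _
  have hexp : A (q - (1/2 : ℝ) • d) (q - (1/2 : ℝ) • d)
      = A q q - A q d + (1/4) * A d d := by
    rw [hA_sub_left]
    rw [hA_smul_left]
    have h1 : A q (q - (1/2:ℝ) • d) = A q q - (1/2) * A q d := by
      rw [sub_eq_add_neg, ← neg_one_smul ℝ ((1/2:ℝ) • d), smul_smul,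
        hA_add_right, hA_smul_right]; ring
    have h2 : A d (q - (1/2:ℝ) • d) = A d q - (1/2) * A d d := by
      rw [sub_eq_add_neg, ← neg_one_smul ℝ ((1/2:ℝ) • d), smul_smul,
        hA_add_right, hA_smul_right]; ring
    rw [h1, h2, hA_symm d q]; ring
  have hcauchy : A q d ≤ A q q + (1/4) * A d d := by
    rw [hexp] at hw; linarith
  -- A p d = A d d - A q d
  have hpd : A p d = A d d - A q d := by
    have hpe : p = d - q := by rw [hqd]; abel
    rw [hpe, hA_sub_left]
  have hdd := hA_psd d
  rw [hpd]
  linarith
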